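/- Let γ > β > 0 and set δ = (β+γ)/2. For every h lying in H_γ with weak derivative g and with h(∞) := lim_{x→∞} h(x) = 0, the Fourier transform of the even reflection F(x) = h(|x|) e^{(β/2)|x|} satisfies the uniform bound sup_{ξ∈ℝ} |(𝓕F)(ξ)| ≤ (2/√(2π)) · (1/√((δ−β) δ (γ−δ))) · ‖h‖_γ. In particular, for each fixed ξ ∈ ℝ, the map h ↦ (𝓕F)(ξ) is a bounded linear functional with respect to the H_γ-norm. -/

import Mathlib

open MeasureTheory Real Filter Set Complex
open scoped Topology

lemma my_integral_exp_neg_mul_Ioi {b : ℝ} (hb : 0 < b) (a : ℝ) :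
    ∫ x in Ioi a, Real.exp (-b * x) = Real.exp (-b * a) / b := by
  have hd : ∀ x ∈ Ioi a, HasDerivAt (fun x => -Real.exp (-b * x) / b) (Real.exp (-b * x)) x := by
    intro x _
    have h1 : HasDerivAt (fun x : ℝ => -b * x) (-b) x := by
      simpa using (hasDerivAt_id x).const_mul (-b)
    have h2 := (h1.exp).neg.div_const b
    refine h2.congr_deriv ?_
    rw [div_eq_iff hb.ne']; ring
  have hcont : ContinuousWithinAt (fun x => -Real.exp (-b * x) / b) (Ici a) a :=
    Continuous.continuousWithinAt (by continuity)
  have htend : Tendsto (fun x => -Real.exp (-b * x) / b) atTop (𝓝 0) := by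
    have h3 : Tendsto (fun x : ℝ => Real.exp (-b * x)) atTop (𝓝 0) :=
      Real.tendsto_exp_atBot.comp (tendsto_id.const_mul_atTop_of_neg (neg_neg_iff_pos.2 hb))
    simpa using (h3.neg).div_const b
  have := integral_Ioi_of_hasDerivAt_of_tendsto hcont hd (exp_neg_integrableOn_Ioi a hb) htend
  rw [this]; field_simp; ring

/-- pointwise AM-GM with parameter -/
lemma my_amgm {γ : ℝ} (c t a : ℝ) (hc : 0 < c) (ha : 0 ≤ a) :
    a ≤ (c * (a ^ 2 * Real.exp (γ * t)) + Real.exp (-γ * t) / c) / 2 := by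
  set u := Real.exp (γ * t / 2) with hu
  set v := Real.exp (-γ * t / 2) with hv
  have huv : u * v = 1 := by rw [hu, hv, ← Real.exp_add]; ring_nf; exact Real.exp_zero
  have hu2 : u ^ 2 = Real.exp (γ * t) := by rw [hu, sq, ← Real.exp_add]; ring_nf
  have hv2 : v ^ 2 = Real.exp (-γ * t) := by rw [hv, sq, ← Real.exp_add]; ring_nf
  have hkey : c * (a ^ 2 * u ^ 2) + v ^ 2 / c - 2 * a * (u * v) = (c * (a * u) - v) ^ 2 / c := by
    field_simp; ring
  have h2 : (c * (a * u) - v) ^ 2 / c ≥ 0 := by positivity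
  rw [hu2, hv2, huv] at hkey
  linarith

/-- If `γ > β > 0`, `δ = (β+γ)/2`, and `h` lies in `H_γ` with weak derivative `g` and
`h(∞) = 0`, then the Fourier transform of the even reflection `F(x) = h(|x|)e^{(β/2)|x|}`
satisfies `sup_ξ |(𝓕F)(ξ)| ≤ (2/√(2π)) (1/√((δ-β)δ(γ-δ))) ‖h‖_γ`; in particular, for each
fixed `ξ` the map `h ↦ (𝓕F)(ξ)` is a bounded linear functional w.r.t. the `H_γ`-norm. -/
theorem fourier_reflection_uniform_bound
    (β γ δ : ℝ) (hβ : 0 < β) (hβγ : β < γ) (hδ : δ = (β + γ) / 2)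
    (h g : ℝ → ℝ)
    (hg_meas : Measurable g)
    (hg_int : IntegrableOn (fun t => g t ^ 2 * Real.exp (γ * t)) (Set.Ioi 0))
    (hFTC : ∀ x ≥ (0 : ℝ), h x = h 0 + ∫ t in (0:ℝ)..x, g t)
    (hlim : Tendsto h atTop (nhds 0)) :
    ∀ ξ : ℝ,
      ‖((Real.sqrt (2 * Real.pi) : ℂ))⁻¹ *
          ∫ x : ℝ, (↑(h |x| * Real.exp (β / 2 * |x|)) : ℂ) * Complex.exp (-(Complex.I * ξ * x))‖
        ≤ (2 / Real.sqrt (2 * Real.pi)) * (1 / Real.sqrt ((δ - β) * δ * (γ - δ))) *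
            Real.sqrt (|h 0| ^ 2 + ∫ t in Set.Ioi (0:ℝ), g t ^ 2 * Real.exp (γ * t)) := by
  intro ξ
  have hγ : 0 < γ := hβ.trans hβγ
  set I : ℝ := ∫ t in Set.Ioi (0:ℝ), g t ^ 2 * Real.exp (γ * t) with hIdef
  have hI0 : 0 ≤ I := integral_nonneg fun t => by positivity
  -- g is integrable on (0,∞)
  have hgint : IntegrableOn g (Ioi 0) := by
    refine ((hg_int.add (exp_neg_integrableOn_Ioi 0 hγ)).div_const 2).mono'
      hg_meas.aestronglyMeasurable.restrict (ae_of_all _ fun t => ?_)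
    rw [Real.norm_eq_abs]
    have := my_amgm (γ := γ) 1 t |g t| one_pos (abs_nonneg _)
    simpa [sq_abs] using this
  -- h x = -∫_{(x,∞)} g for x ≥ 0
  have hIoiT : Tendsto (fun y => ∫ t in (0:ℝ)..y, g t) atTop (𝓝 (∫ t in Ioi 0, g t)) :=
    intervalIntegral_tendsto_integral_Ioi 0 hgint tendsto_id
  have h2 : Tendsto h atTop (𝓝 (h 0 + ∫ t in Ioi 0, g t)) := by
    refine (tendsto_const_nhds.add hIoiT).congr' ?_
    filter_upwards [eventually_ge_atTop (0:ℝ)] with y hy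
    exact (hFTC y hy).symm
  have h0eq : h 0 + ∫ t in Ioi 0, g t = 0 := tendsto_nhds_unique h2 hlim
  have hrep : ∀ x, 0 ≤ x → h x = -∫ t in Ioi x, g t := by
    intro x hx
    have hsplit : (∫ t in Ioi (0:ℝ), g t) = (∫ t in Ioc 0 x, g t) + ∫ t in Ioi x, g t := by
      rw [← setIntegral_union (Ioc_disjoint_Ioi le_rfl) measurableSet_Ioi
        (hgint.mono_set Ioc_subset_Ioi_self) (hgint.mono_set (Ioi_subset_Ioi hx)),
        Ioc_union_Ioi_eq_Ioi hx]
    have hF := hFTC x hx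
    rw [intervalIntegral.integral_of_le hx] at hF
    rw [hF]
    linarith [h0eq, hsplit]
  -- parametrized bound on |h x|
  have hparam : ∀ x, 0 ≤ x → ∀ c, 0 < c →
      |h x| ≤ (c * I + Real.exp (-γ * x) / γ / c) / 2 := by
    intro x hx c hc
    rw [hrep x hx, abs_neg]
    have habs : |∫ t in Ioi x, g t| ≤ ∫ t in Ioi x, |g t| := by
      simpa [Real.norm_eq_abs] using
        norm_integral_le_integral_norm (μ := volume.restrict (Ioi x)) g
    have hmono : (∫ t in Ioi x, |g t|) ≤
        ∫ t in Ioi x, (c * (g t ^ 2 * Real.exp (γ * t)) + Real.exp (-γ * t) / c) / 2 := by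
      refine setIntegral_mono_on ((hgint.mono_set (Ioi_subset_Ioi hx)).abs)
        ((((hg_int.mono_set (Ioi_subset_Ioi hx)).const_mul c).add
          ((exp_neg_integrableOn_Ioi x hγ).div_const c)).div_const 2) measurableSet_Ioi ?_
      intro t _
      simpa [sq_abs] using my_amgm c t |g t| hc (abs_nonneg _)
    have heq : (∫ t in Ioi x, (c * (g t ^ 2 * Real.exp (γ * t)) + Real.exp (-γ * t) / c) / 2)
        = (c * (∫ t in Ioi x, g t ^ 2 * Real.exp (γ * t)) + Real.exp (-γ * x) / γ / c) / 2 := by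
      rw [integral_div, integral_add ((hg_int.mono_set (Ioi_subset_Ioi hx)).const_mul c)
        ((exp_neg_integrableOn_Ioi x hγ).div_const c),
        integral_const_mul, integral_div, my_integral_exp_neg_mul_Ioi hγ x]
    have hIle : (∫ t in Ioi x, g t ^ 2 * Real.exp (γ * t)) ≤ I := by
      refine setIntegral_mono_set hg_int (ae_of_all _ fun t => by positivity)
        (HasSubset.Subset.eventuallyLE (Ioi_subset_Ioi hx))
    rw [heq] at hmono
    have := habs.trans hmono
    nlinarith [mul_le_mul_of_nonneg_left hIle hc.le]
  -- the clean exponential bound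
  set M : ℝ := Real.sqrt I / Real.sqrt γ with hM
  have hM0 : 0 ≤ M := by positivity
  have hMbound : ∀ x, 0 ≤ x → |h x| ≤ M * Real.exp (-(γ/2) * x) := by
    intro x hx
    rcases eq_or_lt_of_le hI0 with hI | hI
    · have hle : ∀ c : ℝ, 0 < c → |h x| ≤ Real.exp (-γ * x) / γ / c / 2 := by
        intro c hc
        have := hparam x hx c hc
        rw [← hI] at this
        simpa using this
      have htend0 : Tendsto (fun c : ℝ => Real.exp (-γ * x) / γ / c / 2) atTop (𝓝 0) := by
        simpa using (Tendsto.div_atTop (tendsto_const_nhds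
          (x := Real.exp (-γ * x) / γ)) tendsto_id).div_const 2
      have h0' : |h x| ≤ 0 := by
        refine ge_of_tendsto htend0 ?_
        filter_upwards [eventually_gt_atTop (0:ℝ)] with c hc
        exact hle c hc
      have : 0 ≤ M * Real.exp (-(γ/2) * x) := by positivity
      linarith
    · have hsI : 0 < Real.sqrt I := Real.sqrt_pos.mpr hI
      have hsγ : 0 < Real.sqrt γ := Real.sqrt_pos.mpr hγ
      set E : ℝ := Real.exp (-(γ/2) * x) with hE
      have hEpos : 0 < E := Real.exp_pos _
      have hc : 0 < E / (Real.sqrt γ * Real.sqrt I) := by positivity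
      have hb := hparam x hx _ hc
      refine hb.trans_eq ?_
      have hE2 : Real.exp (-γ * x) = E ^ 2 := by
        rw [hE, sq, ← Real.exp_add]; ring_nf
      have h1 : Real.sqrt I ^ 2 = I := Real.sq_sqrt hI0
      have h2 : Real.sqrt γ ^ 2 = γ := Real.sq_sqrt hγ.le
      rw [hM, hE2, ← h1, ← h2]
      field_simp
      rw [Real.sqrt_sq (Real.sqrt_nonneg _), Real.sqrt_sq (Real.sqrt_nonneg _)]
      ring
  -- norm of integrand
  set b : ℝ := (γ - β) / 2 with hbdef
  have hbpos : 0 < b := by rw [hbdef]; linarith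
  have hnorm : ∀ x : ℝ, ‖(↑(h |x| * Real.exp (β / 2 * |x|)) : ℂ) *
      Complex.exp (-(Complex.I * ξ * x))‖ = |h (|x|)| * Real.exp (β / 2 * |x|) := by
    intro x
    rw [norm_mul, Complex.norm_real, Complex.norm_exp]
    have hre : (-(Complex.I * ξ * x)).re = 0 := by simp
    rw [hre, Real.exp_zero, mul_one, Real.norm_eq_abs, abs_mul,
      abs_of_pos (Real.exp_pos _)]
  -- measurability of the radial profile on (0,∞)
  have g'int : Integrable ((Ioi (0:ℝ)).indicator g) :=
    (integrable_indicator_iff measurableSet_Ioi).mpr hgint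
  have hHcont : Continuous (fun x : ℝ =>
      |h 0 + ∫ t in (0:ℝ)..x, (Ioi (0:ℝ)).indicator g t| * Real.exp (β / 2 * x)) := by
    have := intervalIntegral.continuous_primitive (fun a b => g'int.intervalIntegrable) 0
    exact ((continuous_const.add this).abs).mul (Real.continuous_exp.comp (continuous_const.mul continuous_id))
  have hagree : ∀ x ∈ Ioi (0:ℝ),
      |h 0 + ∫ t in (0:ℝ)..x, (Ioi (0:ℝ)).indicator g t| * Real.exp (β / 2 * x)
        = |h x| * Real.exp (β / 2 * x) := by
    intro x hx
    have : (∫ t in (0:ℝ)..x, (Ioi (0:ℝ)).indicator g t) = ∫ t in (0:ℝ)..x, g t := by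
      rw [intervalIntegral.integral_of_le (le_of_lt hx),
        intervalIntegral.integral_of_le (le_of_lt hx),
        setIntegral_indicator measurableSet_Ioi,
        inter_eq_self_of_subset_left Ioc_subset_Ioi_self]
    rw [this, ← hFTC x (le_of_lt hx)]
  have hGmeas : AEStronglyMeasurable (fun t => |h t| * Real.exp (β / 2 * t))
      (volume.restrict (Ioi 0)) := by
    refine (hHcont.aestronglyMeasurable.restrict).congr ?_
    exact (ae_restrict_iff' measurableSet_Ioi).mpr (ae_of_all _ hagree)
  -- domination
  have hGle : ∀ t ∈ Ioi (0:ℝ), |h t| * Real.exp (β / 2 * t) ≤ M * Real.exp (-b * t) := by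
    intro t ht
    have h1 := hMbound t (le_of_lt ht)
    have h2 : Real.exp (-(γ/2) * t) * Real.exp (β / 2 * t) = Real.exp (-b * t) := by
      rw [← Real.exp_add, hbdef]; ring_nf
    calc |h t| * Real.exp (β / 2 * t)
        ≤ (M * Real.exp (-(γ/2) * t)) * Real.exp (β / 2 * t) :=
          mul_le_mul_of_nonneg_right h1 (Real.exp_pos _).le
      _ = M * Real.exp (-b * t) := by rw [mul_assoc, h2]
  have hdom : IntegrableOn (fun t => M * Real.exp (-b * t)) (Ioi 0) :=
    (exp_neg_integrableOn_Ioi 0 hbpos).const_mul M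
  have hGint : IntegrableOn (fun t => |h t| * Real.exp (β / 2 * t)) (Ioi 0) := by
    refine hdom.mono' hGmeas ?_
    refine (ae_restrict_iff' measurableSet_Ioi).mpr (ae_of_all _ fun t ht => ?_)
    rw [Real.norm_eq_abs, _root_.abs_of_nonneg (mul_nonneg (abs_nonneg (h t)) (Real.exp_pos _).le)]
    exact hGle t ht
  have hIoiBound : (∫ t in Ioi (0:ℝ), |h t| * Real.exp (β / 2 * t)) ≤ M / b := by
    have hmono2 := setIntegral_mono_on hGint hdom measurableSet_Ioi hGle
    rw [integral_const_mul, my_integral_exp_neg_mul_Ioi hbpos 0] at hmono2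
    calc (∫ t in Ioi (0:ℝ), |h t| * Real.exp (β / 2 * t))
        ≤ M * (Real.exp (-b * 0) / b) := hmono2
      _ = M / b := by rw [mul_zero, Real.exp_zero]; ring
  -- put everything together
  have hS : 0 < Real.sqrt (2 * Real.pi) := Real.sqrt_pos.mpr (by positivity)
  have hnormint : ‖∫ x : ℝ, (↑(h |x| * Real.exp (β / 2 * |x|)) : ℂ) *
      Complex.exp (-(Complex.I * ξ * x))‖ ≤ 2 * (M / b) := by
    refine (norm_integral_le_integral_norm _).trans ?_
    have heq2 : (∫ x : ℝ, ‖(↑(h |x| * Real.exp (β / 2 * |x|)) : ℂ) *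
        Complex.exp (-(Complex.I * ξ * x))‖)
        = ∫ x : ℝ, |h (|x|)| * Real.exp (β / 2 * |x|) := by
      congr 1; funext x; exact hnorm x
    rw [heq2, integral_comp_abs (f := fun t => |h t| * Real.exp (β / 2 * t))]
    linarith [hIoiBound]
  have hδpos : 0 < δ := by rw [hδ]; linarith
  have hsq : Real.sqrt ((δ - β) * δ * (γ - δ)) = Real.sqrt δ * b := by
    rw [show (δ - β) * δ * (γ - δ) = δ * b ^ 2 by rw [hδ, hbdef]; ring,
      Real.sqrt_mul hδpos.le, Real.sqrt_sq hbpos.le]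
  have hMle : M / b ≤ Real.sqrt (|h 0| ^ 2 + I) / (Real.sqrt δ * b) := by
    rw [hM, div_div]
    refine div_le_div₀ (Real.sqrt_nonneg _) (Real.sqrt_le_sqrt (by nlinarith [sq_nonneg (h 0)]))
      (by positivity) ?_
    exact mul_le_mul_of_nonneg_right (Real.sqrt_le_sqrt (by rw [hδ]; linarith)) hbpos.le
  calc ‖((Real.sqrt (2 * Real.pi) : ℂ))⁻¹ *
      ∫ x : ℝ, (↑(h |x| * Real.exp (β / 2 * |x|)) : ℂ) * Complex.exp (-(Complex.I * ξ * x))‖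
      = (Real.sqrt (2 * Real.pi))⁻¹ *
        ‖∫ x : ℝ, (↑(h |x| * Real.exp (β / 2 * |x|)) : ℂ) *
          Complex.exp (-(Complex.I * ξ * x))‖ := by
        rw [norm_mul, norm_inv, Complex.norm_real, Real.norm_eq_abs, abs_of_pos hS]
    _ ≤ (Real.sqrt (2 * Real.pi))⁻¹ * (2 * (M / b)) := by
        exact mul_le_mul_of_nonneg_left hnormint (by positivity)
    _ ≤ (Real.sqrt (2 * Real.pi))⁻¹ *
          (2 * (Real.sqrt (|h 0| ^ 2 + I) / (Real.sqrt δ * b))) := by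
        refine mul_le_mul_of_nonneg_left ?_ (by positivity)
        linarith [hMle]
    _ = 2 / Real.sqrt (2 * Real.pi) * (1 / Real.sqrt ((δ - β) * δ * (γ - δ))) *
          Real.sqrt (|h 0| ^ 2 + I) := by
        rw [hsq]; ring
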